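/- Let n ≥ 1, d_i > 0, m_i > 0 (i = 1,…,n), θ ∈ ℝ, and let f_i : [0,∞)^n → ℝ be continuous. Assume there exist ū_i > 0 such that f_i(u) < 0 for every i whenever u ∈ R̄ = {u ∈ [0,∞)^n : Σ_{i=1}^n u_i/ū_i ≥ 1}. Suppose u_i ∈ C²(ℝ) with u_i ≥ 0 satisfy the differential inequalities d_i u_i'' + θ u_i' + u_i^{m_i} f_i(u_1,…,u_n) ≥ 0 on ℝ for i = 1,…,n, with (u_1,…,u_n)(x) → e_- as x → -∞ and (u_1,…,u_n)(x) → e_+ as x → +∞, where e_± are nonnegative equilibria (points at which u_i^{m_i} f_i(u) = 0 for all i). Then for any α_1,…,α_n > 0 and all x ∈ ℝ: Σ_{i=1}^n α_i u_i(x) ≤ max(α_1 ū_1,…,α_n ū_n) · (max(d_1,…,d_n)/min(d_1,…,d_n)). -/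

import Mathlib

open Filter

/-- A continuous function with limits at `±∞` that somewhere exceeds both limits
attains a global maximum. -/
lemma nbmp_exists_max (G : ℝ → ℝ) (hGc : Continuous G) (Lm Lp : ℝ)
    (h1 : Tendsto G atBot (nhds Lm)) (h2 : Tendsto G atTop (nhds Lp))
    (x₀ : ℝ) (hm : Lm < G x₀) (hp : Lp < G x₀) :
    ∃ z : ℝ, ∀ x, G x ≤ G z := by
  obtain ⟨R₁, hR₁⟩ := eventually_atTop.mp (h2.eventually_lt_const hp)
  obtain ⟨R₂, hR₂⟩ := eventually_atBot.mp (h1.eventually_lt_const hm)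
  set a := min R₂ x₀
  set b := max R₁ x₀
  have hx₀ : x₀ ∈ Set.Icc a b := ⟨min_le_right _ _, le_max_right _ _⟩
  obtain ⟨z, hz, hzmax⟩ := isCompact_Icc.exists_isMaxOn ⟨x₀, hx₀⟩ hGc.continuousOn
  refine ⟨z, fun x => ?_⟩
  by_cases hx : x ∈ Set.Icc a b
  · exact hzmax hx
  · have : G x < G x₀ := by
      rcases not_and_or.mp hx with h | h
      · exact hR₂ x (le_trans (le_of_not_ge h) (min_le_left _ _))
      · exact hR₁ x (le_trans (le_max_left R₁ x₀) (le_of_not_ge h))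
    exact le_trans this.le (hzmax hx₀)

/-- Core of the NBMP upper bound, for `0 ≤ θ`. -/
theorem nbmp_core (n : ℕ) (d m : Fin (n + 1) → ℝ) (θ : ℝ)
    (f : Fin (n + 1) → (Fin (n + 1) → ℝ) → ℝ)
    (hd : ∀ i, 0 < d i) (hm : ∀ i, 0 < m i)
    (ubar : Fin (n + 1) → ℝ) (hubar : ∀ i, 0 < ubar i)
    (hRbar : ∀ v : Fin (n + 1) → ℝ, (∀ j, 0 ≤ v j) →
      1 ≤ (∑ i, v i / ubar i) → ∀ i, f i v < 0)
    (u : Fin (n + 1) → ℝ → ℝ)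
    (hu2 : ∀ i, ContDiff ℝ 2 (u i))
    (hunn : ∀ i x, 0 ≤ u i x)
    (hineq : ∀ i x, 0 ≤ d i * deriv (deriv (u i)) x + θ * deriv (u i) x
        + (u i x) ^ (m i) * f i (fun j => u j x))
    (em ep : Fin (n + 1) → ℝ)
    (hemnn : ∀ i, 0 ≤ em i) (hepnn : ∀ i, 0 ≤ ep i)
    (heqm : ∀ i, (em i) ^ (m i) * f i em = 0)
    (heqp : ∀ i, (ep i) ^ (m i) * f i ep = 0)
    (hlimm : ∀ i, Tendsto (u i) atBot (nhds (em i)))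
    (hlimp : ∀ i, Tendsto (u i) atTop (nhds (ep i)))
    (α : Fin (n + 1) → ℝ) (hα : ∀ i, 0 < α i) (hθ : 0 ≤ θ) :
    ∀ x : ℝ,
      ∑ i, α i * u i x ≤
        (Finset.univ.sup' Finset.univ_nonempty (fun i => α i * ubar i))
          * ((Finset.univ.sup' Finset.univ_nonempty d)
            / (Finset.univ.inf' Finset.univ_nonempty d)) := by
  set A := Finset.univ.sup' Finset.univ_nonempty (fun i => α i * ubar i) with hAdef
  set Dp := Finset.univ.sup' Finset.univ_nonempty d with hDpdef
  set Dm := Finset.univ.inf' Finset.univ_nonempty d with hDmdef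
  have hDmle : ∀ i, Dm ≤ d i := fun i => Finset.inf'_le _ (Finset.mem_univ i)
  have hDple : ∀ i, d i ≤ Dp := fun i => Finset.le_sup' _ (Finset.mem_univ i)
  have hDm0 : 0 < Dm := by
    obtain ⟨i, -, hi⟩ := Finset.exists_mem_eq_inf' Finset.univ_nonempty d
    rw [← hDmdef] at hi; rw [hi]; exact hd i
  have hDp0 : 0 < Dp := lt_of_lt_of_le hDm0 (le_trans (hDmle 0) (hDple 0))
  have hDmDp : Dm ≤ Dp := le_trans (hDmle 0) (hDple 0)
  have hAi : ∀ i, α i * ubar i ≤ A := fun i => Finset.le_sup' (fun j => α j * ubar j) (Finset.mem_univ i)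
  have hA0 : 0 < A := lt_of_lt_of_le (mul_pos (hα 0) (hubar 0)) (hAi 0)
  set G : ℝ → ℝ := fun x => ∑ i, α i * u i x with hGdef
  set σf : ℝ → ℝ := fun x => ∑ i, u i x / ubar i with hσdef
  -- smoothness
  have hud : ∀ i, Differentiable ℝ (u i) := fun i =>
    (hu2 i).differentiable (by norm_num)
  have hud' : ∀ i, Differentiable ℝ (deriv (u i)) := by
    intro i
    have h := hu2 i
    have h12 : (2 : WithTop ℕ∞) = 1 + 1 := by norm_num
    rw [h12, contDiff_succ_iff_deriv] at h
    exact h.2.2.differentiable one_ne_zero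
  set G' : ℝ → ℝ := fun x => ∑ i, α i * deriv (u i) x with hG'def
  have hG' : ∀ x, HasDerivAt G (G' x) x := by
    intro x
    exact HasDerivAt.fun_sum fun i _ => ((hud i x).hasDerivAt).const_mul (α i)
  have hGc : Continuous G := by
    apply continuous_finset_sum
    exact fun i _ => continuous_const.mul ((hud i).continuous)
  have hσc : Continuous σf := by
    apply continuous_finset_sum
    exact fun i _ => ((hud i).continuous).div_const (ubar i)
  -- G ≤ A * σ
  have hGσ : ∀ x, G x ≤ A * σf x := by
    intro x
    rw [hσdef]
    simp only
    rw [Finset.mul_sum]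
    apply Finset.sum_le_sum
    intro i _
    have h1 : α i * u i x = (α i * ubar i) * (u i x / ubar i) := by
      rw [mul_comm (α i) (ubar i), mul_comm (α i) (u i x), div_eq_mul_inv, ← mul_assoc,
        mul_assoc (ubar i), mul_comm (u i x) (α i), ← mul_assoc, mul_assoc _ (α i),
        mul_comm (ubar i), mul_assoc, mul_assoc, mul_inv_cancel₀ (ne_of_gt (hubar i)), mul_one]
    rw [h1]
    exact mul_le_mul_of_nonneg_right (hAi i)
      (div_nonneg (hunn i x) (hubar i).le)
  -- equilibria are in the interior region
  have hequil : ∀ e : Fin (n + 1) → ℝ, (∀ i, 0 ≤ e i) →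
      (∀ i, (e i) ^ (m i) * f i e = 0) → (∑ i, e i / ubar i) < 1 := by
    intro e he heq
    by_contra hcon
    push_neg at hcon
    have hzero : ∀ i, e i = 0 := by
      intro i
      have hfi := hRbar e he hcon i
      have := heq i
      rcases mul_eq_zero.mp this with h | h
      · exact ((Real.rpow_eq_zero (he i) (ne_of_gt (hm i))).mp h)
      · exact absurd h (ne_of_lt hfi)
    have : (∑ i, e i / ubar i) = 0 := by
      apply Finset.sum_eq_zero
      intro i _
      rw [hzero i]; simp
    linarith
  have hσem : (∑ i, em i / ubar i) < 1 := hequil em hemnn heqm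
  have hσep : (∑ i, ep i / ubar i) < 1 := hequil ep hepnn heqp
  -- limits of G and σ
  have hGm : Tendsto G atBot (nhds (∑ i, α i * em i)) :=
    tendsto_finset_sum _ fun i _ => (hlimm i).const_mul (α i)
  have hGp : Tendsto G atTop (nhds (∑ i, α i * ep i)) :=
    tendsto_finset_sum _ fun i _ => (hlimp i).const_mul (α i)
  have hσp : Tendsto σf atTop (nhds (∑ i, ep i / ubar i)) :=
    tendsto_finset_sum _ fun i _ => (hlimp i).div_const (ubar i)
  have hsumle : ∀ e : Fin (n + 1) → ℝ, (∀ i, 0 ≤ e i) →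
      (∑ i, α i * e i) ≤ A * (∑ i, e i / ubar i) := by
    intro e he
    rw [Finset.mul_sum]
    apply Finset.sum_le_sum
    intro i _
    have h1 : α i * e i = (α i * ubar i) * (e i / ubar i) := by
      rw [mul_comm (α i) (ubar i), mul_comm (α i) (e i), div_eq_mul_inv, ← mul_assoc,
        mul_assoc (ubar i), mul_comm (e i) (α i), ← mul_assoc, mul_assoc _ (α i),
        mul_comm (ubar i), mul_assoc, mul_assoc, mul_inv_cancel₀ (ne_of_gt (hubar i)), mul_one]
    rw [h1]
    exact mul_le_mul_of_nonneg_right (hAi i) (div_nonneg (he i) (hubar i).le)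
  have hLm : (∑ i, α i * em i) < A := by
    calc (∑ i, α i * em i) ≤ A * (∑ i, em i / ubar i) := hsumle em hemnn
    _ < A * 1 := by exact mul_lt_mul_of_pos_left hσem hA0
    _ = A := mul_one A
  have hLp : (∑ i, α i * ep i) < A := by
    calc (∑ i, α i * ep i) ≤ A * (∑ i, ep i / ubar i) := hsumle ep hepnn
    _ < A * 1 := by exact mul_lt_mul_of_pos_left hσep hA0
    _ = A := mul_one A
  have hAM : A ≤ A * (Dp / Dm) :=
    le_mul_of_one_le_right hA0.le ((one_le_div hDm0).mpr hDmDp)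
  -- main argument by contradiction
  by_contra hcon
  push_neg at hcon
  obtain ⟨x₀, hx₀⟩ := hcon
  change A * (Dp / Dm) < G x₀ at hx₀
  obtain ⟨z, hz⟩ := nbmp_exists_max G hGc _ _ hGm hGp x₀
    (lt_of_lt_of_le hLm (le_trans hAM hx₀.le)) (lt_of_lt_of_le hLp (le_trans hAM hx₀.le))
  have hGz : A * (Dp / Dm) < G z := lt_of_lt_of_le hx₀ (hz x₀)
  have hG'z : G' z = 0 := by
    rw [← (hG' z).deriv]
    have hmax : IsLocalMax G z := Filter.Eventually.of_forall hz
    exact IsLocalMax.deriv_eq_zero hmax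
  -- first crossing of σ = 1 to the right of z
  obtain ⟨R, hR⟩ := eventually_atTop.mp (hσp.eventually_lt_const hσep)
  set S := {x : ℝ | z ≤ x ∧ σf x ≤ 1} with hSdef
  have hSne : S.Nonempty := ⟨max R z, le_max_right _ _, (hR _ (le_max_left _ _)).le⟩
  have hSbdd : BddBelow S := ⟨z, fun x hx => hx.1⟩
  have hSclosed : IsClosed S := by
    have : S = Set.Ici z ∩ σf ⁻¹' Set.Iic 1 := by
      ext x; simp [hSdef, Set.mem_setOf_eq, and_comm]
    rw [this]
    exact isClosed_Ici.inter (isClosed_Iic.preimage hσc)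
  set b := sInf S with hbdef
  have hbS : b ∈ S := hSclosed.csInf_mem hSne hSbdd
  have hzb : z ≤ b := hbS.1
  have hσb : σf b ≤ 1 := hbS.2
  have hmid : ∀ x, z < x → x < b → 1 < σf x := by
    intro x h1 h2
    by_contra hc
    push_neg at hc
    exact absurd (csInf_le hSbdd ⟨h1.le, hc⟩) (not_le.mpr h2)
  -- monotonicity of ω i on [z, b]
  have hω : ∀ i, MonotoneOn (fun x => d i * deriv (u i) x + θ * u i x) (Set.Icc z b) := by
    intro i
    apply monotoneOn_of_deriv_nonneg (convex_Icc z b)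
    · exact ((continuous_const.mul (hud' i).continuous).add
        (continuous_const.mul (hud i).continuous)).continuousOn
    · apply Differentiable.differentiableOn
      exact ((hud' i).const_mul (d i)).add ((hud i).const_mul θ)
    · intro x hx
      rw [interior_Icc] at hx
      have hder : deriv (fun x => d i * deriv (u i) x + θ * u i x) x
          = d i * deriv (deriv (u i)) x + θ * deriv (u i) x := by
        rw [deriv_fun_add (((hud' i) x).const_mul (d i)) (((hud i) x).const_mul θ),
          deriv_const_mul _ ((hud' i) x), deriv_const_mul _ ((hud i) x)]
      rw [hder]
      have hσx : 1 ≤ σf x := (hmid x hx.1 hx.2).le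
      have hfneg : f i (fun j => u j x) < 0 := hRbar _ (fun j => hunn j x) hσx i
      have hterm : (u i x) ^ (m i) * f i (fun j => u j x) ≤ 0 :=
        mul_nonpos_of_nonneg_of_nonpos (Real.rpow_nonneg (hunn i x) _) hfneg.le
      have := hineq i x
      linarith
  -- key differential inequality on [z, b]
  have key : ∀ x ∈ Set.Icc z b,
      G' z + θ * (G z / Dp - G x / Dm) ≤ G' x := by
    intro x hx
    have hsum : ∀ i : Fin (n + 1),
        α i * deriv (u i) z + θ * (α i * u i z / Dp - α i * u i x / Dm)
          ≤ α i * deriv (u i) x := by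
      intro i
      have hωi := hω i (Set.left_mem_Icc.mpr hzb) hx hx.1
      simp only at hωi
      -- from hωi : d i * u i' z + θ * u i z ≤ d i * u i' x + θ * u i x
      have h2 : θ * (u i z / Dp - u i x / Dm) ≤ θ * ((u i z - u i x) / d i) := by
        have ha : θ * (u i z / Dp) ≤ θ * (u i z / d i) := by
          apply mul_le_mul_of_nonneg_left _ hθ
          exact div_le_div_of_nonneg_left (hunn i z) (hd i) (hDple i)
        have hb : θ * (u i x / d i) ≤ θ * (u i x / Dm) := by
          apply mul_le_mul_of_nonneg_left _ hθ
          exact div_le_div_of_nonneg_left (hunn i x) hDm0 (hDmle i)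
        have hc : θ * ((u i z - u i x) / d i)
            = θ * (u i z / d i) - θ * (u i x / d i) := by ring
        rw [hc]
        rw [mul_sub]
        linarith
      have h3 : θ * ((u i z - u i x) / d i) ≤ deriv (u i) x - deriv (u i) z := by
        rw [mul_div_assoc'] at *
        rw [div_le_iff₀ (hd i)]
        nlinarith [hd i]
      have h4 : θ * (u i z / Dp - u i x / Dm) ≤ deriv (u i) x - deriv (u i) z :=
        le_trans h2 h3
      have h5 : α i * (θ * (u i z / Dp - u i x / Dm)) ≤ α i * (deriv (u i) x - deriv (u i) z) :=
        mul_le_mul_of_nonneg_left h4 (hα i).le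
      have h6 : θ * (α i * u i z / Dp - α i * u i x / Dm)
          = α i * (θ * (u i z / Dp - u i x / Dm)) := by ring
      linarith [h5, h6]
    calc G' z + θ * (G z / Dp - G x / Dm)
        = ∑ i, (α i * deriv (u i) z + θ * (α i * u i z / Dp - α i * u i x / Dm)) := by
          rw [Finset.sum_add_distrib]
          congr 1
          rw [← Finset.mul_sum]
          congr 1
          rw [Finset.sum_sub_distrib]
          congr 1
          · rw [hGdef]; simp only; rw [Finset.sum_div]
          · rw [hGdef]; simp only; rw [Finset.sum_div]
      _ ≤ ∑ i, α i * deriv (u i) x := Finset.sum_le_sum fun i _ => hsum i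
  set ρ := Dm / Dp * G z with hρdef
  have hρA : A < ρ := by
    have h1 : Dm / Dp * (A * (Dp / Dm)) < Dm / Dp * G z :=
      mul_lt_mul_of_pos_left hGz (div_pos hDm0 hDp0)
    have h2 : Dm / Dp * (A * (Dp / Dm)) = A := by
      field_simp
    linarith
  have keypos : ∀ x ∈ Set.Icc z b, G x ≤ ρ → 0 ≤ G' x := by
    intro x hx hle
    have h1 := key x hx
    have h2 : G x / Dm ≤ G z / Dp := by
      rw [hρdef] at hle
      rw [div_le_div_iff₀ hDm0 hDp0]
      calc G x * Dp ≤ (Dm / Dp * G z) * Dp := by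
            exact mul_le_mul_of_nonneg_right hle hDp0.le
        _ = G z * Dm := by field_simp
    have h3 : 0 ≤ θ * (G z / Dp - G x / Dm) :=
      mul_nonneg hθ (by linarith)
    linarith [hG'z ▸ h1]
  -- comparison: G stays above ρ up to b
  set T := {x : ℝ | x ∈ Set.Icc z b ∧ ρ ≤ G x} with hTdef
  have hGz0 : (0:ℝ) ≤ G z := le_trans (by positivity) hGz.le
  have hρGz : ρ ≤ G z := by
    rw [hρdef]
    apply mul_le_of_le_one_left hGz0
    rw [div_le_one hDp0]
    exact hDmDp
  have hTne : T.Nonempty := ⟨z, Set.left_mem_Icc.mpr hzb, hρGz⟩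
  have hTbdd : BddAbove T := ⟨b, fun x hx => hx.1.2⟩
  have hTclosed : IsClosed T := by
    have : T = Set.Icc z b ∩ G ⁻¹' Set.Ici ρ := rfl
    rw [this]
    exact isClosed_Icc.inter (isClosed_Ici.preimage hGc)
  set c := sSup T with hcdef
  have hcT : c ∈ T := hTclosed.csSup_mem hTne hTbdd
  have hGb : ρ ≤ G b := by
    have hmono : MonotoneOn G (Set.Icc c b) := by
      apply monotoneOn_of_deriv_nonneg (convex_Icc c b) hGc.continuousOn
      · apply Differentiable.differentiableOn
        exact fun x => (hG' x).differentiableAt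
      · intro x hx
        rw [interior_Icc] at hx
        rw [(hG' x).deriv]
        apply keypos x ⟨le_trans hcT.1.1 hx.1.le, hx.2.le⟩
        by_contra hc2
        push_neg at hc2
        exact absurd (le_csSup hTbdd ⟨⟨le_trans hcT.1.1 hx.1.le, hx.2.le⟩, hc2.le⟩)
          (not_le.mpr hx.1)
    calc ρ ≤ G c := hcT.2
      _ ≤ G b := hmono (Set.mem_Icc.mpr ⟨le_refl c, hcT.1.2⟩)
          (Set.mem_Icc.mpr ⟨hcT.1.2, le_refl b⟩) hcT.1.2
  have hGbA : G b ≤ A := by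
    calc G b ≤ A * σf b := hGσ b
      _ ≤ A * 1 := mul_le_mul_of_nonneg_left hσb hA0.le
      _ = A := mul_one A
  linarith

/-- Upper bound in the NBMP for lower solutions of the `n`-species system. -/
theorem nbmp_upper_bound (n : ℕ) (d m : Fin (n + 1) → ℝ) (θ : ℝ)
    (f : Fin (n + 1) → (Fin (n + 1) → ℝ) → ℝ)
    (hd : ∀ i, 0 < d i) (hm : ∀ i, 0 < m i)
    (hf : ∀ i, ContinuousOn (f i) {v | ∀ j, 0 ≤ v j})
    (ubar : Fin (n + 1) → ℝ) (hubar : ∀ i, 0 < ubar i)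
    (hRbar : ∀ v : Fin (n + 1) → ℝ, (∀ j, 0 ≤ v j) →
      1 ≤ (∑ i, v i / ubar i) → ∀ i, f i v < 0)
    (u : Fin (n + 1) → ℝ → ℝ)
    (hu2 : ∀ i, ContDiff ℝ 2 (u i))
    (hunn : ∀ i x, 0 ≤ u i x)
    (hineq : ∀ i x, 0 ≤ d i * deriv (deriv (u i)) x + θ * deriv (u i) x
        + (u i x) ^ (m i) * f i (fun j => u j x))
    (em ep : Fin (n + 1) → ℝ)
    (hemnn : ∀ i, 0 ≤ em i) (hepnn : ∀ i, 0 ≤ ep i)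
    (heqm : ∀ i, (em i) ^ (m i) * f i em = 0)
    (heqp : ∀ i, (ep i) ^ (m i) * f i ep = 0)
    (hlimm : ∀ i, Tendsto (u i) atBot (nhds (em i)))
    (hlimp : ∀ i, Tendsto (u i) atTop (nhds (ep i)))
    (α : Fin (n + 1) → ℝ) (hα : ∀ i, 0 < α i) :
    ∀ x : ℝ,
      ∑ i, α i * u i x ≤
        (Finset.univ.sup' Finset.univ_nonempty (fun i => α i * ubar i))
          * ((Finset.univ.sup' Finset.univ_nonempty d)
            / (Finset.univ.inf' Finset.univ_nonempty d)) := by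
  rcases le_or_gt 0 θ with hθ | hθ
  · exact nbmp_core n d m θ f hd hm ubar hubar hRbar u hu2 hunn hineq
      em ep hemnn hepnn heqm heqp hlimm hlimp α hα hθ
  · intro x
    have hderiv1 : ∀ i, (deriv fun y => u i (-y)) = fun y => -deriv (u i) (-y) := by
      intro i
      funext y
      exact deriv_comp_neg (u i) y
    have hderiv2 : ∀ i y, deriv (deriv fun y => u i (-y)) y = deriv (deriv (u i)) (-y) := by
      intro i y
      rw [hderiv1 i]
      rw [deriv.fun_neg]
      rw [deriv_comp_neg (deriv (u i)) y]
      ring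
    have := nbmp_core n d m (-θ) f hd hm ubar hubar hRbar (fun i y => u i (-y))
      (fun i => (hu2 i).comp (contDiff_id.neg))
      (fun i y => hunn i (-y))
      (by
        intro i y
        have h := hineq i (-y)
        rw [hderiv2 i y, hderiv1 i]
        simp only
        calc (0:ℝ) ≤ d i * deriv (deriv (u i)) (-y) + θ * deriv (u i) (-y)
            + (u i (-y)) ^ (m i) * f i (fun j => u j (-y)) := h
          _ = d i * deriv (deriv (u i)) (-y) + (-θ) * -deriv (u i) (-y)
            + (u i (-y)) ^ (m i) * f i (fun j => u j (-y)) := by ring_nf)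
      ep em hepnn hemnn heqp heqm
      (fun i => (hlimp i).comp tendsto_neg_atBot_atTop)
      (fun i => (hlimm i).comp tendsto_neg_atTop_atBot)
      α hα (by linarith) (-x)
    simpa using this
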